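/- Let n ≥ 2, let A be the Cartan matrix of type C_n, and let σ be any permutation of {1,…,n}. Then the kernel of B_σ, viewed as a linear map ℚⁿ → ℚⁿ, has dimension 0 if n is even and dimension 1 if n is odd. -/
import Mathlib


open Matrix

/-- The Cartan matrix of type `Cₙ` (nodes indexed `0, …, n-1`; the long root is the last
node): `a i i = 2`, consecutive nodes give `-1`, except `a (n-1) (n-2) = -2`. -/
def cartanC (n : ℕ) : Matrix (Fin n) (Fin n) ℚ :=
  fun i j => if i = j then 2
    else if i.val + 1 = j.val then -1
    else if j.val + 1 = i.val then (if i.val = n - 1 then -2 else -1) else 0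

/-- The acyclic exchange matrix `B_σ` attached to a Cartan matrix `A` and a permutation `σ`:
`b i i = 0`, `b i j = -a i j` if `σ i < σ j`, and `b i j = a i j` if `σ i > σ j`. -/
def Bmat {n : ℕ} (A : Matrix (Fin n) (Fin n) ℚ) (σ : Equiv.Perm (Fin n)) :
    Matrix (Fin n) (Fin n) ℚ :=
  fun i j => if i = j then 0 else if σ i < σ j then -A i j else A i j

private lemma Bmat_zero {n : ℕ} (σ : Equiv.Perm (Fin n)) (i j : Fin n)
    (h1 : i.val + 1 ≠ j.val) (h2 : j.val + 1 ≠ i.val) :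
    Bmat (cartanC n) σ i j = 0 := by
  unfold Bmat
  by_cases h : i = j
  · rw [if_pos h]
  · have hC : cartanC n i j = 0 := by
      unfold cartanC
      rw [if_neg h, if_neg h1, if_neg h2]
    rw [if_neg h, hC]
    simp

private lemma Bmat_ne_up {n : ℕ} (σ : Equiv.Perm (Fin n)) (i j : Fin n)
    (h : i.val + 1 = j.val) : Bmat (cartanC n) σ i j ≠ 0 := by
  have hij : i ≠ j := Fin.ne_of_val_ne (by omega)
  have hC : cartanC n i j = -1 := by
    unfold cartanC; rw [if_neg hij, if_pos h]
  unfold Bmat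
  rw [if_neg hij, hC]
  split <;> norm_num

private lemma Bmat_ne_down {n : ℕ} (σ : Equiv.Perm (Fin n)) (i j : Fin n)
    (h : j.val + 1 = i.val) : Bmat (cartanC n) σ i j ≠ 0 := by
  have hij : i ≠ j := Fin.ne_of_val_ne (by omega)
  have h1 : ¬ (i.val + 1 = j.val) := by omega
  have hC : cartanC n i j = if i.val = n - 1 then -2 else -1 := by
    unfold cartanC; rw [if_neg hij, if_neg h1, if_pos h]
  unfold Bmat
  rw [if_neg hij, hC]
  split_ifs <;> norm_num

/-- symmetrizer -/
private def dC (n : ℕ) : Fin n → ℚ := fun i => if i.val = n - 1 then 1 else 2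

private lemma dC_ne_zero {n : ℕ} (i : Fin n) : dC n i ≠ 0 := by
  unfold dC; split <;> norm_num

private lemma cartanC_sym {n : ℕ} (i j : Fin n) (hij : i ≠ j) :
    dC n i * cartanC n i j = dC n j * cartanC n j i := by
  have hji : j ≠ i := Ne.symm hij
  have hin := i.isLt
  have hjn := j.isLt
  unfold cartanC dC
  rw [if_neg hij, if_neg hji]
  split_ifs <;> first | omega | norm_num

private lemma Bmat_skew {n : ℕ} (σ : Equiv.Perm (Fin n)) (i j : Fin n) :
    dC n i * Bmat (cartanC n) σ i j = -(dC n j * Bmat (cartanC n) σ j i) := by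
  by_cases hij : i = j
  · subst hij; simp [Bmat]
  · have hji : j ≠ i := Ne.symm hij
    have hσ : σ i ≠ σ j := fun e => hij (σ.injective e)
    unfold Bmat
    rw [if_neg hij, if_neg hji]
    rcases lt_trichotomy (σ i) (σ j) with h | h | h
    · rw [if_pos h, if_neg (not_lt.mpr h.le)]
      rw [mul_neg, cartanC_sym i j hij]
    · exact absurd h hσ
    · rw [if_neg (not_lt.mpr h.le), if_pos h]
      rw [mul_neg, neg_neg]
      exact cartanC_sym i j hij

private lemma det_Bmat_eq_zero {n : ℕ} (ho : Odd n) (σ : Equiv.Perm (Fin n)) :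
    (Bmat (cartanC n) σ).det = 0 := by
  set M := Matrix.diagonal (dC n) * Bmat (cartanC n) σ with hM
  have hMT : Mᵀ = -M := by
    ext i j
    simp only [hM, Matrix.transpose_apply, Matrix.diagonal_mul, Matrix.neg_apply]
    exact Bmat_skew σ j i
  have h1 : M.det = -M.det := by
    conv_lhs => rw [← Matrix.det_transpose M, hMT]
    rw [Matrix.det_neg, Fintype.card_fin, ho.neg_one_pow, neg_one_mul]
  have h2 : M.det = 0 := by linarith
  have h3 : (∏ i, dC n i) * (Bmat (cartanC n) σ).det = 0 := by
    rw [← Matrix.det_diagonal, ← Matrix.det_mul, ← hM]; exact h2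
  rcases mul_eq_zero.mp h3 with h | h
  · exact absurd h (Finset.prod_ne_zero_iff.mpr (fun i _ => dC_ne_zero i))
  · exact h

private lemma master_lemma (n : ℕ) (hn : 2 ≤ n) (σ : Equiv.Perm (Fin n))
    (x : Fin n → ℚ) (hx : ∀ i, ∑ j, Bmat (cartanC n) σ i j * x j = 0) :
    (Even n → x = 0) ∧ (x ⟨0, by omega⟩ = 0 → x = 0) := by
  set X : ℕ → ℚ := fun m => if h : m < n then x ⟨m, h⟩ else 0 with hX
  have hXeq : ∀ (m : ℕ) (h : m < n), X m = x ⟨m, h⟩ := by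
    intro m h; simp only [hX]; rw [dif_pos h]
  -- interior rows
  have rowmid : ∀ (j : ℕ) (_h : j + 2 < n),
      Bmat (cartanC n) σ ⟨j+1, by omega⟩ ⟨j, by omega⟩ * X j
        + Bmat (cartanC n) σ ⟨j+1, by omega⟩ ⟨j+2, by omega⟩ * X (j+2) = 0 := by
    intro j h
    have h0 := hx ⟨j+1, by omega⟩
    have hzero : ∀ k ∈ Finset.univ, k ∉ ({⟨j, by omega⟩, ⟨j+2, by omega⟩} : Finset (Fin n)) →
        Bmat (cartanC n) σ ⟨j+1, by omega⟩ k * x k = 0 := by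
      intro k _ hk
      simp only [Finset.mem_insert, Finset.mem_singleton] at hk
      push_neg at hk
      have e1 : k.val ≠ j := fun e => hk.1 (Fin.ext e)
      have e2 : k.val ≠ j + 2 := fun e => hk.2 (Fin.ext e)
      exact mul_eq_zero_of_left
        (Bmat_zero σ _ _ (by show j+1+1 ≠ k.val; omega) (by show k.val+1 ≠ j+1; omega)) _
    have key := (Finset.sum_subset (Finset.subset_univ _) hzero).trans h0
    rw [Finset.sum_pair (Fin.ne_of_val_ne (by omega : (j : ℕ) ≠ j + 2))] at key
    rw [hXeq j (by omega), hXeq (j+2) (by omega)]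
    exact key
  have row0 : X 1 = 0 := by
    have h0 := hx ⟨0, by omega⟩
    have hzero : ∀ k ∈ Finset.univ, k ∉ ({⟨1, by omega⟩} : Finset (Fin n)) →
        Bmat (cartanC n) σ ⟨0, by omega⟩ k * x k = 0 := by
      intro k _ hk
      simp only [Finset.mem_singleton] at hk
      have e1 : k.val ≠ 1 := fun e => hk (Fin.ext e)
      exact mul_eq_zero_of_left
        (Bmat_zero σ _ _ (by show 0+1 ≠ k.val; omega) (by show k.val+1 ≠ 0; omega)) _
    have key := (Finset.sum_subset (Finset.subset_univ _) hzero).trans h0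
    rw [Finset.sum_singleton] at key
    have hb := Bmat_ne_up σ (⟨0, by omega⟩ : Fin n) ⟨1, by omega⟩ rfl
    rw [hXeq 1 (by omega)]
    rcases mul_eq_zero.mp key with h | h
    · exact absurd h hb
    · exact h
  have rowlast : X (n - 2) = 0 := by
    have h0 := hx ⟨n-1, by omega⟩
    have hzero : ∀ k ∈ Finset.univ, k ∉ ({⟨n-2, by omega⟩} : Finset (Fin n)) →
        Bmat (cartanC n) σ ⟨n-1, by omega⟩ k * x k = 0 := by
      intro k _ hk
      simp only [Finset.mem_singleton] at hk
      have e1 : k.val ≠ n - 2 := fun e => hk (Fin.ext e)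
      have hkn := k.isLt
      exact mul_eq_zero_of_left
        (Bmat_zero σ _ _ (by show n-1+1 ≠ k.val; omega) (by show k.val+1 ≠ n-1; omega)) _
    have key := (Finset.sum_subset (Finset.subset_univ _) hzero).trans h0
    rw [Finset.sum_singleton] at key
    have hb := Bmat_ne_down σ (⟨n-1, by omega⟩ : Fin n) ⟨n-2, by omega⟩
      (by show n-2+1 = n-1; omega)
    rw [hXeq (n-2) (by omega)]
    rcases mul_eq_zero.mp key with h | h
    · exact absurd h hb
    · exact h
  have up : ∀ j : ℕ, j + 2 < n → X j = 0 → X (j+2) = 0 := by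
    intro j h hj
    have hrow := rowmid j h
    rw [hj, mul_zero, zero_add] at hrow
    have hb := Bmat_ne_up σ (⟨j+1, by omega⟩ : Fin n) ⟨j+2, by omega⟩ rfl
    rcases mul_eq_zero.mp hrow with h' | h'
    · exact absurd h' hb
    · exact h'
  have down : ∀ j : ℕ, j + 2 < n → X (j+2) = 0 → X j = 0 := by
    intro j h hj
    have hrow := rowmid j h
    rw [hj, mul_zero, add_zero] at hrow
    have hb := Bmat_ne_down σ (⟨j+1, by omega⟩ : Fin n) ⟨j, by omega⟩ rfl
    rcases mul_eq_zero.mp hrow with h' | h'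
    · exact absurd h' hb
    · exact h'
  have upAll : ∀ (k m : ℕ), m + 2*k < n → X m = 0 → X (m + 2*k) = 0 := by
    intro k
    induction k with
    | zero => intro m h hm; simpa using hm
    | succ k ih =>
      intro m h hm
      have e : m + 2*(k+1) = (m + 2*k) + 2 := by ring
      rw [e]
      exact up _ (by omega) (ih m (by omega) hm)
  have downAll : ∀ (k m : ℕ), m + 2*k < n → X (m + 2*k) = 0 → X m = 0 := by
    intro k
    induction k with
    | zero => intro m h hm; simpa using hm
    | succ k ih =>
      intro m h hm
      have e : m + 2*(k+1) = (m + 2) + 2*k := by ring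
      rw [e] at hm
      exact down m (by omega) (ih (m+2) (by omega) hm)
  have hoddzero : ∀ m : ℕ, m < n → Odd m → X m = 0 := by
    rintro m hm ⟨k, hk⟩
    rw [show m = 1 + 2*k by omega]
    exact upAll k 1 (by omega) row0
  constructor
  · intro he
    funext i
    have hi := i.isLt
    have hz : X i.val = 0 := by
      rcases Nat.even_or_odd i.val with hme | hmo
      · obtain ⟨s, hs⟩ := hme
        obtain ⟨t, ht⟩ := he
        exact downAll (t - s - 1) i.val (by omega)
          (by rw [show i.val + 2*(t - s - 1) = n - 2 by omega]; exact rowlast)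
      · exact hoddzero i.val hi hmo
    rw [hXeq i.val hi] at hz
    simpa using hz
  · intro h0
    have hX0 : X 0 = 0 := by rw [hXeq 0 (by omega)]; exact h0
    funext i
    have hi := i.isLt
    have hz : X i.val = 0 := by
      rcases Nat.even_or_odd i.val with hme | hmo
      · obtain ⟨s, hs⟩ := hme
        rw [show i.val = 0 + 2*s by omega]
        exact upAll s 0 (by omega) hX0
      · exact hoddzero i.val hi hmo
    rw [hXeq i.val hi] at hz
    simpa using hz

/-- In type `Cₙ`, the kernel of any acyclic exchange matrix `B_σ` has dimension `0`
if `n` is even and `1` if `n` is odd. -/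
theorem kernel_dim_Bmat_typeC (n : ℕ) (hn : 2 ≤ n) (σ : Equiv.Perm (Fin n)) :
    Module.finrank ℚ (LinearMap.ker (Matrix.toLin' (Bmat (cartanC n) σ))) =
      if Even n then 0 else 1 := by
  have hker : ∀ x : Fin n → ℚ,
      x ∈ LinearMap.ker (Matrix.toLin' (Bmat (cartanC n) σ)) →
      ∀ i : Fin n, ∑ j, Bmat (cartanC n) σ i j * x j = 0 := by
    intro x hx i
    have h := LinearMap.mem_ker.mp hx
    rw [Matrix.toLin'_apply] at h
    have h2 := congrFun h i
    simpa [Matrix.mulVec, dotProduct] using h2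
  rcases Nat.even_or_odd n with he | ho
  · rw [if_pos he]
    have hbot : LinearMap.ker (Matrix.toLin' (Bmat (cartanC n) σ)) = ⊥ := by
      rw [Submodule.eq_bot_iff]
      intro x hxk
      exact (master_lemma n hn σ x (hker x hxk)).1 he
    rw [hbot]
    exact finrank_bot ℚ _
  · rw [if_neg (Nat.not_even_iff_odd.mpr ho)]
    have hle : Module.finrank ℚ
        (LinearMap.ker (Matrix.toLin' (Bmat (cartanC n) σ))) ≤ 1 := by
      have hinj : Function.Injective
          ((LinearMap.proj (⟨0, by omega⟩ : Fin n) : (Fin n → ℚ) →ₗ[ℚ] ℚ).comp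
            (LinearMap.ker (Matrix.toLin' (Bmat (cartanC n) σ))).subtype) := by
        rw [← LinearMap.ker_eq_bot, Submodule.eq_bot_iff]
        rintro ⟨y, hyk⟩ hy
        have hy' : y ⟨0, by omega⟩ = 0 := LinearMap.mem_ker.mp hy
        have hzero := (master_lemma n hn σ y (hker y hyk)).2 hy'
        exact Subtype.ext hzero
      have h := LinearMap.finrank_le_finrank_of_injective hinj
      simpa using h
    have hge : Module.finrank ℚ
        (LinearMap.ker (Matrix.toLin' (Bmat (cartanC n) σ))) ≠ 0 := by
      intro h0
      obtain ⟨v, hv0, hv⟩ := (Matrix.exists_mulVec_eq_zero_iff).mpr (det_Bmat_eq_zero ho σ)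
      have hvk : v ∈ LinearMap.ker (Matrix.toLin' (Bmat (cartanC n) σ)) := by
        rw [LinearMap.mem_ker, Matrix.toLin'_apply]; exact hv
      rw [Submodule.finrank_eq_zero] at h0
      rw [h0, Submodule.mem_bot] at hvk
      exact hv0 hvk
    omega
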